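/- Fix a prime p, positive integers r, s, and φ ∈ Φ_{r,s}. Given (A_1,…,A_s) ∈ Y_s, define integers l_1 := A_{φ(1)} and l_i := (A_{φ(i)} + δ_φ(i)p) − (A_{φ(i−1)} + δ_φ(i−1)p) for 2 ≤ i ≤ r. Then 0 < l_i < p for all i, and l_1 + ⋯ + l_i = A_{φ(i)} + δ_φ(i)p for all 1 ≤ i ≤ r; in particular each partial sum l_1+⋯+l_i is congruent to A_{φ(i)} modulo p and is prime to p. -/

import Mathlib

open scoped BigOperators

namespace FMP

/-- Partial sums: `psum l i = l 0 + ... + l i`. -/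
def psum {r : ℕ} (l : Fin r → ℕ) (i : Fin r) : ℕ := ∑ j ∈ Finset.Iic i, l j
section Comb

/-- Extension of φ : Fin r → Fin s to ℕ → ℕ (by zero). -/
def extF {r s : ℕ} (φ : Fin r → Fin s) : ℕ → ℕ := fun a => if h : a < r then (φ ⟨a, h⟩ : ℕ) else 0

/-- Φ_{r,s}: surjections φ : [r] → [s] with φ(a) ≠ φ(a+1) for all a. -/
def PhiSet (r s : ℕ) : Set (Fin r → Fin s) :=
  {φ | Function.Surjective φ ∧ ∀ a : ℕ, a + 1 < r → extF φ a ≠ extF φ (a + 1)}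

/-- δ_φ(i) = #{a ∈ [i-1] : φ(a) > φ(a+1)} (1-based i). -/
def deltaF {r s : ℕ} (φ : Fin r → Fin s) (i : ℕ) : ℕ :=
  ((Finset.range (i - 1)).filter fun a => extF φ (a + 1) < extF φ a).card

/-- β(φ) = δ_φ(r) + 1. -/
def betaF {r s : ℕ} (φ : Fin r → Fin s) : ℕ := deltaF φ r + 1

/-- X_r: tuples (l_1, ..., l_r) ∈ [p-1]^r all of whose partial sums are prime to p. -/
def Xr (p r : ℕ) : Set (Fin r → ℕ) :=
  {l | (∀ i, 0 < l i ∧ l i < p) ∧ ∀ i, Nat.Coprime (psum l i) p}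

/-- Y_s: tuples 0 < A_1 < ⋯ < A_s < p. -/
def Ys (p s : ℕ) : Set (Fin s → ℕ) :=
  {Av | StrictMono Av ∧ (∀ t, 0 < Av t) ∧ ∀ t, Av t < p}

end Comb



lemma delta_succ {r s : ℕ} (φ : Fin r → Fin s) (n : ℕ) :
    deltaF φ (n + 2) = deltaF φ (n + 1) +
      (if extF φ (n + 1) < extF φ n then 1 else 0) := by
  unfold deltaF
  have h1 : n + 2 - 1 = n + 1 := rfl
  have h2 : n + 1 - 1 = n := rfl
  rw [h1, h2, Finset.range_add_one, Finset.filter_insert]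
  split
  · rw [Finset.card_insert_of_notMem (by simp)]
  · simp

/-- Given φ ∈ Φ_{r,s} and (A_1,…,A_s) ∈ Y_s, the integers
l_1 := A_{φ(1)}, l_i := (A_{φ(i)} + δ_φ(i)p) − (A_{φ(i−1)} + δ_φ(i−1)p) satisfy
0 < l_i < p, have partial sums l_1 + ⋯ + l_i = A_{φ(i)} + δ_φ(i)p, and in particular each
partial sum is congruent to A_{φ(i)} mod p and prime to p.
(Here indices of `Fin r` are 0-based, so position `i : Fin r` is the paper's `i+1`.) -/
theorem construction_lemma (p r s : ℕ) (hp : p.Prime) (hs : 1 ≤ s) (hsr : s ≤ r)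
    (φ : Fin r → Fin s) (hφ : φ ∈ PhiSet r s) (Av : Fin s → ℕ) (hA : Av ∈ Ys p s)
    (l : Fin r → ℤ)
    (hl : ∀ i : Fin r, l i =
      if (i : ℕ) = 0 then (Av (φ i) : ℤ)
      else ((Av (φ i) : ℤ) + deltaF φ ((i : ℕ) + 1) * p)
        - ((Av (φ ⟨(i : ℕ) - 1, lt_of_le_of_lt (Nat.sub_le _ _) i.isLt⟩) : ℤ)
            + deltaF φ (i : ℕ) * p)) :
    (∀ i, 0 < l i ∧ l i < p) ∧
    (∀ i : Fin r, ∑ j ∈ Finset.Iic i, l j = (Av (φ i) : ℤ) + deltaF φ ((i : ℕ) + 1) * p) ∧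
    (∀ i : Fin r, (∑ j ∈ Finset.Iic i, l j) ≡ (Av (φ i) : ℤ) [ZMOD p]) ∧
    (∀ i : Fin r, ¬ ((p : ℤ) ∣ ∑ j ∈ Finset.Iic i, l j)) := by
  obtain ⟨hmono, hApos, hAlt⟩ := hA
  obtain ⟨hsurj, hadj⟩ := hφ
  -- auxiliary facts for a positive-index i
  have key : ∀ (k : ℕ) (hv : k + 1 < r),
      l ⟨k + 1, hv⟩ = (Av (φ ⟨k + 1, hv⟩) : ℤ) + deltaF φ (k + 2) * p
        - ((Av (φ ⟨k, by omega⟩) : ℤ) + deltaF φ (k + 1) * p) := by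
    intro k hv
    rw [hl ⟨k + 1, hv⟩]
    simp only [Nat.succ_ne_zero, if_false]
    norm_num
  have hbound : ∀ i, 0 < l i ∧ l i < (p : ℤ) := by
    intro i
    obtain ⟨v, hv⟩ := i
    match v with
    | 0 =>
      have h0 : l ⟨0, hv⟩ = (Av (φ ⟨0, hv⟩) : ℤ) := by
        rw [hl ⟨0, hv⟩]; norm_num
      rw [h0]
      exact ⟨by exact_mod_cast hApos _, by exact_mod_cast hAlt _⟩
    | k + 1 =>
      have hkr : k < r := by omega
      set j : Fin r := ⟨k, hkr⟩
      set i : Fin r := ⟨k + 1, hv⟩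
      have he1 : extF φ k = (φ j : ℕ) := by simp [extF, hkr]; rfl
      have he2 : extF φ (k + 1) = (φ i : ℕ) := by simp [extF, hv]; rfl
      have hne : (φ j : ℕ) ≠ (φ i : ℕ) := by
        have := hadj k hv
        rwa [he1, he2] at this
      have hds := delta_succ φ k
      rw [he1, he2] at hds
      have hli := key k hv
      rcases lt_or_gt_of_ne hne with hlt | hgt
      · -- φ j < φ i, ascent, indicator 0
        have : ¬ ((φ i : ℕ) < (φ j : ℕ)) := by omega
        rw [if_neg this, add_zero] at hds
        have hAv : Av (φ j) < Av (φ i) := hmono (by exact hlt)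
        have h1 : 0 < Av (φ j) := hApos _
        have h2 : Av (φ i) < p := hAlt _
        rw [hli, hds]
        push_cast
        have h1' : (0 : ℤ) < Av (φ j) := by exact_mod_cast h1
        have h2' : (Av (φ i) : ℤ) < p := by exact_mod_cast h2
        have hAv' : (Av (φ j) : ℤ) < Av (φ i) := by exact_mod_cast hAv
        constructor <;> nlinarith
      · -- φ i < φ j, descent, indicator 1
        rw [if_pos hgt] at hds
        have hAv : Av (φ i) < Av (φ j) := hmono (by exact hgt)
        have h1 : 0 < Av (φ i) := hApos _
        have h2 : Av (φ j) < p := hAlt _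
        rw [hli, hds]
        push_cast
        constructor
        · have : (Av (φ i) : ℤ) > 0 := by exact_mod_cast h1
          have : (Av (φ j) : ℤ) < p := by exact_mod_cast h2
          nlinarith
        · have : (Av (φ i) : ℤ) < Av (φ j) := by exact_mod_cast hAv
          have hp0 : (0 : ℤ) < p := by exact_mod_cast hp.pos
          nlinarith
  have hsum : ∀ i : Fin r, ∑ j ∈ Finset.Iic i, l j
      = (Av (φ i) : ℤ) + deltaF φ ((i : ℕ) + 1) * p := by
    intro i
    obtain ⟨v, hv⟩ := i
    induction v with
    | zero =>
      have hIic : Finset.Iic (⟨0, hv⟩ : Fin r) = {⟨0, hv⟩} := by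
        ext x
        simp only [Finset.mem_Iic, Finset.mem_singleton, Fin.le_def, Fin.ext_iff]
        omega
      rw [hIic, Finset.sum_singleton, hl ⟨0, hv⟩]
      simp [deltaF]
    | succ k ih =>
      have hkr : k < r := by omega
      have hIic : Finset.Iic (⟨k + 1, hv⟩ : Fin r)
          = insert ⟨k + 1, hv⟩ (Finset.Iic ⟨k, hkr⟩) := by
        ext x
        simp [Fin.le_def, Fin.ext_iff]
        omega
      rw [hIic, Finset.sum_insert (by simp [Fin.le_def]), ih hkr, key k hv]
      ring
  refine ⟨hbound, hsum, ?_, ?_⟩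
  · intro i
    rw [hsum i]
    have : (Av (φ i) : ℤ) + deltaF φ ((i : ℕ) + 1) * p
        - (Av (φ i) : ℤ) = deltaF φ ((i : ℕ) + 1) * p := by ring
    exact (Int.modEq_iff_dvd.mpr ⟨deltaF φ ((i : ℕ) + 1), by ring⟩).symm
  · intro i hdvd
    rw [hsum i] at hdvd
    have h1 : (p : ℤ) ∣ (deltaF φ ((i : ℕ) + 1) * p : ℤ) := ⟨_, mul_comm _ _⟩
    have h2 : (p : ℤ) ∣ (Av (φ i) : ℤ) := by
      have he : (Av (φ i) : ℤ)
          = ((Av (φ i) : ℤ) + deltaF φ ((i : ℕ) + 1) * p)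
            - deltaF φ ((i : ℕ) + 1) * p := by ring
      rw [he]
      exact hdvd.sub h1
    have h3 : p ∣ Av (φ i) := by exact_mod_cast h2
    have := Nat.le_of_dvd (hApos _) h3
    exact absurd this (by have := hAlt (φ i); omega)


end FMP
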